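/- Let P_+ and Q_+ be the leading homogeneous components of P and Q with deg P = Kd > 1, deg Q = Ke > 1, gcd(d,e)=1, and suppose J(P,Q) is a nonzero constant. If P_+ and Q_+ have a common zero other than the origin, then P_+^e = c · Q_+^d for some constant c ∈ ℂ*. -/

import Mathlib

open MvPolynomial

lemma degree_add' {σ : Type*} (a b : σ →₀ ℕ) : (a + b).degree = a.degree + b.degree := by
  simp [Finsupp.degree_eq_weight_one, map_add]

lemma degree_single' {σ : Type*} (i : σ) : (Finsupp.single i 1).degree = 1 := by
  exact Finsupp.degree_single i 1

lemma degree_fin_two (m : Fin 2 →₀ ℕ) : m.degree = m 0 + m 1 := by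
  rw [Finsupp.degree_apply, Finset.sum_subset (Finset.subset_univ m.support)]
  · simp [Fin.sum_univ_two]
  · intro i _ h
    simpa using Finsupp.notMem_support_iff.mp h

lemma isHomogeneous_pderiv {σ : Type*} {φ : MvPolynomial σ ℂ} {n : ℕ} (i : σ)
    (hφ : φ.IsHomogeneous n) : (pderiv i φ).IsHomogeneous (n - 1) := by
  classical
  rw [φ.as_sum, map_sum]
  apply IsHomogeneous.sum
  intro v hv
  rw [pderiv_monomial]
  rcases Nat.eq_zero_or_pos (v i) with h | h
  · rw [h]; norm_num
    exact isHomogeneous_zero _ _ _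
  · apply isHomogeneous_monomial
    have hdeg : v.degree = n := by
      by_contra hne
      exact (mem_support_iff.mp hv) (hφ.coeff_eq_zero hne)
    have h1 : Finsupp.single i 1 ≤ v := by
      rw [Finsupp.single_le_iff]; exact h
    have h2 : (v - Finsupp.single i 1) + Finsupp.single i 1 = v := tsub_add_cancel_of_le h1
    have h3 := congrArg Finsupp.degree h2
    rw [degree_add', degree_single'] at h3
    omega

lemma euler_fin_two {φ : MvPolynomial (Fin 2) ℂ} {n : ℕ} (hφ : φ.IsHomogeneous n) :
    X 0 * pderiv 0 φ + X 1 * pderiv 1 φ = (n : MvPolynomial (Fin 2) ℂ) * φ := by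
  conv_lhs => rw [φ.as_sum, map_sum, map_sum]
  conv_rhs => rw [φ.as_sum]
  rw [Finset.mul_sum, Finset.mul_sum, Finset.mul_sum, ← Finset.sum_add_distrib]
  apply Finset.sum_congr rfl
  intro v hv
  have hdeg : v.degree = n := by
    by_contra hne
    exact (mem_support_iff.mp hv) (hφ.coeff_eq_zero hne)
  rw [degree_fin_two] at hdeg
  have key : ∀ i : Fin 2, X i * pderiv i (monomial v (coeff v φ))
      = monomial v (coeff v φ * (v i)) := by
    intro i
    rw [pderiv_monomial]
    rcases Nat.eq_zero_or_pos (v i) with h | h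
    · rw [h]; norm_num
    · have h1 : Finsupp.single i 1 ≤ v := by
        rw [Finsupp.single_le_iff]; exact h
      rw [X, monomial_mul, one_mul, add_tsub_cancel_of_le h1]
  rw [key 0, key 1]
  have : (n : MvPolynomial (Fin 2) ℂ) = C (n : ℂ) := (C_eq_coe_nat n).symm
  rw [this, C_mul_monomial, ← map_add]
  congr 1
  push_cast [← hdeg]
  ring

lemma derivative_psi (f : MvPolynomial (Fin 2) ℂ) :
    Polynomial.derivative (aeval ![Polynomial.X, (1 : Polynomial ℂ)] f)
      = aeval ![Polynomial.X, (1 : Polynomial ℂ)] (pderiv 0 f) := by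
  induction f using MvPolynomial.induction_on with
  | C a => simp
  | add p q hp hq => simp [hp, hq]
  | mul_X p i hp =>
      rw [map_mul, Polynomial.derivative_mul, pderiv_mul, map_add, map_mul, map_mul, hp]
      fin_cases i <;> simp

lemma aeval_monomial_fin2 (v : Fin 2 →₀ ℕ) (c : ℂ) :
    aeval ![Polynomial.X, (1 : Polynomial ℂ)] (monomial v c)
      = Polynomial.C c * Polynomial.X ^ (v 0) := by
  rw [monomial_eq, map_mul]
  rw [Finsupp.prod_fintype _ _ (fun i => pow_zero _), Fin.prod_univ_two, map_mul, map_pow, map_pow,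
    aeval_X, aeval_X]
  simp [algebraMap_eq]

lemma homog_aeval_eq_zero {D : MvPolynomial (Fin 2) ℂ} {n : ℕ} (hD : D.IsHomogeneous n)
    (h : aeval ![Polynomial.X, (1 : Polynomial ℂ)] D = 0) : D = 0 := by
  by_contra h0
  obtain ⟨m, hm⟩ := Finset.nonempty_iff_ne_empty.mpr (fun hs => h0 (support_eq_empty.mp hs))
  have hdeg : ∀ v ∈ D.support, v 0 + v 1 = n := by
    intro v hv
    rw [← degree_fin_two]
    by_contra hne
    exact (mem_support_iff.mp hv) (hD.coeff_eq_zero hne)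
  have hcoeff : Polynomial.coeff (aeval ![Polynomial.X, (1 : Polynomial ℂ)] D) (m 0)
      = coeff m D := by
    conv_lhs => rw [D.as_sum, map_sum]
    rw [Polynomial.finset_sum_coeff]
    rw [Finset.sum_eq_single m]
    · rw [aeval_monomial_fin2, Polynomial.coeff_C_mul, Polynomial.coeff_X_pow, if_pos rfl,
        mul_one]
    · intro v hv hne
      rw [aeval_monomial_fin2, Polynomial.coeff_C_mul, Polynomial.coeff_X_pow, if_neg, mul_zero]
      intro heq
      apply hne
      have h2 : v 1 = m 1 := by have := hdeg v hv; have := hdeg m hm; omega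
      ext i
      fin_cases i
      · exact heq.symm
      · exact h2
    · intro hmm; exact absurd hm hmm
  rw [h, Polynomial.coeff_zero] at hcoeff
  exact (mem_support_iff.mp hm) hcoeff.symm

lemma hc_total_ne {p : MvPolynomial (Fin 2) ℂ} (hp : p ≠ 0) :
    homogeneousComponent p.totalDegree p ≠ 0 := by
  obtain ⟨m, hm, hdeg⟩ : ∃ m ∈ p.support, p.totalDegree = (m.sum fun _ e => e) :=
    Finset.exists_mem_eq_sup _
      (by simpa [Finset.nonempty_iff_ne_empty, support_eq_empty] using hp) _
  intro h0
  have hc := coeff_homogeneousComponent (n := p.totalDegree) (φ := p) m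
  have hdeg' : m.degree = p.totalDegree := by rw [hdeg]; rfl
  rw [if_pos hdeg', h0, coeff_zero] at hc
  exact (mem_support_iff.mp hm) hc.symm

lemma totalDegree_pderiv_le (i : Fin 2) (f : MvPolynomial (Fin 2) ℂ) :
    (pderiv i f).totalDegree ≤ f.totalDegree - 1 := by
  conv_lhs => rw [← sum_homogeneousComponent f, map_sum]
  apply (totalDegree_finset_sum _ _).trans
  apply Finset.sup_le
  intro k hk
  rw [Finset.mem_range] at hk
  apply (isHomogeneous_pderiv i (homogeneousComponent_isHomogeneous k f)).totalDegree_le.trans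
  omega

lemma poly_prop {a b : Polynomial ℂ} (ha : a ≠ 0) (hb : b ≠ 0)
    (h : Polynomial.derivative a * b = a * Polynomial.derivative b) :
    ∃ c : ℂ, c ≠ 0 ∧ a = Polynomial.C c * b := by
  classical
  letI : GCDMonoid (Polynomial ℂ) := UniqueFactorizationMonoid.toGCDMonoid _
  obtain ⟨a₁, b₁, ea, eb, hu⟩ := extract_gcd a b
  set g := gcd a b with hgdef
  have hg : g ≠ 0 := fun h0 => ha (by rw [ea, h0, zero_mul])
  have ha₁ : a₁ ≠ 0 := fun h0 => ha (by rw [ea, h0, mul_zero])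
  have hb₁ : b₁ ≠ 0 := fun h0 => hb (by rw [eb, h0, mul_zero])
  have key : Polynomial.derivative a₁ * b₁ = a₁ * Polynomial.derivative b₁ := by
    apply mul_left_cancel₀ (mul_ne_zero hg hg)
    have h' := h
    rw [ea, eb, Polynomial.derivative_mul, Polynomial.derivative_mul] at h'
    ring_nf at h' ⊢
    linear_combination h'
  have hrel : IsRelPrime a₁ b₁ := gcd_isUnit_iff_isRelPrime.mp hu
  have deriv_zero : ∀ p q : Polynomial ℂ, p ≠ 0 → IsRelPrime p q →
      Polynomial.derivative p * q = p * Polynomial.derivative q →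
      Polynomial.derivative p = 0 := by
    intro p q hp hpq hk
    have hdvd : p ∣ Polynomial.derivative p := by
      apply hpq.dvd_of_dvd_mul_right (y := Polynomial.derivative p)
      exact ⟨Polynomial.derivative q, hk⟩
    by_contra hne
    have hle := Polynomial.natDegree_le_of_dvd hdvd hne
    have hd0 : p.natDegree ≠ 0 := by
      intro h0
      obtain ⟨c, rfl⟩ := Polynomial.natDegree_eq_zero.mp h0
      simp at hne
    exact absurd hle (not_le.mpr (Polynomial.natDegree_derivative_lt hd0))
  have hda := deriv_zero a₁ b₁ ha₁ hrel key
  have hdb := deriv_zero b₁ a₁ hb₁ hrel.symm (by linear_combination -key)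
  obtain ⟨ca, hca⟩ : ∃ c, a₁ = Polynomial.C c := ⟨_, Polynomial.eq_C_of_derivative_eq_zero hda⟩
  obtain ⟨cb, hcb⟩ : ∃ c, b₁ = Polynomial.C c := ⟨_, Polynomial.eq_C_of_derivative_eq_zero hdb⟩
  have hca0 : ca ≠ 0 := fun h0 => ha₁ (by rw [hca, h0, map_zero])
  have hcb0 : cb ≠ 0 := fun h0 => hb₁ (by rw [hcb, h0, map_zero])
  refine ⟨ca / cb, div_ne_zero hca0 hcb0, ?_⟩
  rw [ea, eb, hca, hcb]
  rw [div_eq_mul_inv, map_mul]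
  have : Polynomial.C cb⁻¹ * Polynomial.C cb = 1 := by
    rw [← map_mul, inv_mul_cancel₀ hcb0, map_one]
  calc g * Polynomial.C ca = g * Polynomial.C ca * (Polynomial.C cb⁻¹ * Polynomial.C cb) := by
        rw [this, mul_one]
    _ = Polynomial.C ca * Polynomial.C cb⁻¹ * (g * Polynomial.C cb) := by ring

/-- Let `P_+`, `Q_+` be the leading homogeneous components of `P`, `Q`
with `deg P = Kd > 1`, `deg Q = Ke > 1`, `gcd(d,e) = 1`, and `J(P,Q)` a nonzero
constant. If `P_+` and `Q_+` have a common zero other than the origin, then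
`P_+^e = c·Q_+^d` for some `c ∈ ℂ*`. -/
theorem stmt_15 (P Q : MvPolynomial (Fin 2) ℂ) (K d e : ℕ)
    (hK : 0 < K) (hd : 0 < d) (he : 0 < e) (hcop : Nat.Coprime d e)
    (hP : P.totalDegree = K * d) (hQ : Q.totalDegree = K * e)
    (hP1 : 1 < K * d) (hQ1 : 1 < K * e)
    (c₀ : ℂ) (hc₀ : c₀ ≠ 0)
    (hJ : pderiv 0 P * pderiv 1 Q - pderiv 1 P * pderiv 0 Q = C c₀)
    (z : ℂ × ℂ) (hz : z ≠ 0)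
    (hPz : eval ![z.1, z.2] (homogeneousComponent (K * d) P) = 0)
    (hQz : eval ![z.1, z.2] (homogeneousComponent (K * e) Q) = 0) :
    ∃ c : ℂ, c ≠ 0 ∧
      (homogeneousComponent (K * d) P) ^ e = C c * (homogeneousComponent (K * e) Q) ^ d := by
  clear hcop hz hPz hQz
  set m := K * d with hmdef
  set n := K * e with hndef
  set F := homogeneousComponent m P with hFdef
  set G := homogeneousComponent n Q with hGdef
  have hm2 : 2 ≤ m := hP1
  have hn2 : 2 ≤ n := hQ1
  have hP0 : P ≠ 0 := by intro h; rw [h, totalDegree_zero] at hP; omega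
  have hQ0 : Q ≠ 0 := by intro h; rw [h, totalDegree_zero] at hQ; omega
  have hFhom : F.IsHomogeneous m := homogeneousComponent_isHomogeneous m P
  have hGhom : G.IsHomogeneous n := homogeneousComponent_isHomogeneous n Q
  have hF0 : F ≠ 0 := by rw [hFdef, ← hP]; exact hc_total_ne hP0
  have hG0 : G ≠ 0 := by rw [hGdef, ← hQ]; exact hc_total_ne hQ0
  set P₁ := ∑ k ∈ Finset.range m, homogeneousComponent k P with hP₁def
  set Q₁ := ∑ k ∈ Finset.range n, homogeneousComponent k Q with hQ₁def
  have hPsplit : P = F + P₁ := by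
    conv_lhs => rw [← sum_homogeneousComponent P]
    rw [hP, Finset.sum_range_succ]
    ring
  have hQsplit : Q = G + Q₁ := by
    conv_lhs => rw [← sum_homogeneousComponent Q]
    rw [hQ, Finset.sum_range_succ]
    ring
  have hP₁deg : P₁.totalDegree ≤ m - 1 := by
    apply (totalDegree_finset_sum _ _).trans
    apply Finset.sup_le
    intro k hk
    rw [Finset.mem_range] at hk
    exact (homogeneousComponent_isHomogeneous k P).totalDegree_le.trans (by omega)
  have hQ₁deg : Q₁.totalDegree ≤ n - 1 := by
    apply (totalDegree_finset_sum _ _).trans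
    apply Finset.sup_le
    intro k hk
    rw [Finset.mem_range] at hk
    exact (homogeneousComponent_isHomogeneous k Q).totalDegree_le.trans (by omega)
  -- the Jacobian of the top parts vanishes
  have hJtop : pderiv 0 F * pderiv 1 G - pderiv 1 F * pderiv 0 G = 0 := by
    set N := m + n - 2 with hNdef
    have hhom : (pderiv 0 F * pderiv 1 G - pderiv 1 F * pderiv 0 G).IsHomogeneous N := by
      have h1 := (isHomogeneous_pderiv 0 hFhom).mul (isHomogeneous_pderiv 1 hGhom)
      have h2 := (isHomogeneous_pderiv 1 hFhom).mul (isHomogeneous_pderiv 0 hGhom)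
      have heN : (m-1) + (n-1) = N := by omega
      rw [heN] at h1 h2
      exact h1.sub h2
    set Rst := pderiv 0 F * pderiv 1 Q₁ + pderiv 0 P₁ * pderiv 1 G + pderiv 0 P₁ * pderiv 1 Q₁
      - (pderiv 1 F * pderiv 0 Q₁ + pderiv 1 P₁ * pderiv 0 G + pderiv 1 P₁ * pderiv 0 Q₁)
      with hRstdef
    have hsplit : pderiv 0 P * pderiv 1 Q - pderiv 1 P * pderiv 0 Q
        = (pderiv 0 F * pderiv 1 G - pderiv 1 F * pderiv 0 G) + Rst := by
      rw [hRstdef, hPsplit, hQsplit]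
      simp only [map_add]
      ring
    have hneg : ∀ v : MvPolynomial (Fin 2) ℂ, (-v).totalDegree = v.totalDegree := by
      intro v
      unfold MvPolynomial.totalDegree
      rw [support_neg]
    have hadd : ∀ (u v : MvPolynomial (Fin 2) ℂ) (t : ℕ), u.totalDegree ≤ t →
        v.totalDegree ≤ t → (u + v).totalDegree ≤ t := by
      intro u v t hu hv
      exact (totalDegree_add u v).trans (max_le hu hv)
    have bnd : ∀ (u v : MvPolynomial (Fin 2) ℂ) (s t : ℕ), u.totalDegree ≤ s →
        v.totalDegree ≤ t → (u * v).totalDegree ≤ s + t := by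
      intro u v s t hu hv
      exact (totalDegree_mul u v).trans (add_le_add hu hv)
    have hFx : (pderiv 0 F).totalDegree ≤ m - 1 := (isHomogeneous_pderiv 0 hFhom).totalDegree_le
    have hFy : (pderiv 1 F).totalDegree ≤ m - 1 := (isHomogeneous_pderiv 1 hFhom).totalDegree_le
    have hGx : (pderiv 0 G).totalDegree ≤ n - 1 := (isHomogeneous_pderiv 0 hGhom).totalDegree_le
    have hGy : (pderiv 1 G).totalDegree ≤ n - 1 := (isHomogeneous_pderiv 1 hGhom).totalDegree_le
    have hP₁x : (pderiv 0 P₁).totalDegree ≤ m - 2 :=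
      (totalDegree_pderiv_le 0 P₁).trans (by omega)
    have hP₁y : (pderiv 1 P₁).totalDegree ≤ m - 2 :=
      (totalDegree_pderiv_le 1 P₁).trans (by omega)
    have hQ₁x : (pderiv 0 Q₁).totalDegree ≤ n - 2 :=
      (totalDegree_pderiv_le 0 Q₁).trans (by omega)
    have hQ₁y : (pderiv 1 Q₁).totalDegree ≤ n - 2 :=
      (totalDegree_pderiv_le 1 Q₁).trans (by omega)
    have hRdeg : Rst.totalDegree < N := by
      have hlt : ∀ w : MvPolynomial (Fin 2) ℂ, w.totalDegree ≤ N - 1 → w.totalDegree < N := by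
        intro w hw; omega
      apply hlt
      rw [hRstdef, sub_eq_add_neg]
      apply hadd
      · apply hadd
        · apply hadd
          · exact (bnd _ _ _ _ hFx hQ₁y).trans (by omega)
          · exact (bnd _ _ _ _ hP₁x hGy).trans (by omega)
        · exact (bnd _ _ _ _ hP₁x hQ₁y).trans (by omega)
      · rw [hneg]
        apply hadd
        · apply hadd
          · exact (bnd _ _ _ _ hFy hQ₁x).trans (by omega)
          · exact (bnd _ _ _ _ hP₁y hGx).trans (by omega)
        · exact (bnd _ _ _ _ hP₁y hQ₁x).trans (by omega)
    have h1 := congrArg (homogeneousComponent N) hJ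
    rw [hsplit, map_add] at h1
    rw [homogeneousComponent_eq_zero N _ hRdeg, add_zero] at h1
    rw [homogeneousComponent_of_mem ((mem_homogeneousSubmodule _ _).mpr hhom), if_pos rfl]
      at h1
    rw [homogeneousComponent_eq_zero N (C c₀) (by rw [totalDegree_C]; omega)] at h1
    exact h1
  -- Euler relations
  have hEulerF := euler_fin_two hFhom
  have hEulerG := euler_fin_two hGhom
  -- n G F_x = m F G_x
  have hy : (n : MvPolynomial (Fin 2) ℂ) * G * pderiv 0 F
      = (m : MvPolynomial (Fin 2) ℂ) * F * pderiv 0 G := by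
    linear_combination (pderiv 0 G) * hEulerF - (pderiv 0 F) * hEulerG + X 1 * hJtop
  have hK0 : (K : MvPolynomial (Fin 2) ℂ) ≠ 0 := by
    exact_mod_cast Nat.cast_ne_zero.mpr hK.ne'
  have hcancel : (e : MvPolynomial (Fin 2) ℂ) * G * pderiv 0 F
      = (d : MvPolynomial (Fin 2) ℂ) * F * pderiv 0 G := by
    apply mul_left_cancel₀ hK0
    have hm' : (m : MvPolynomial (Fin 2) ℂ) = (K : MvPolynomial (Fin 2) ℂ) * d := by
      rw [hmdef]; push_cast; ring
    have hn' : (n : MvPolynomial (Fin 2) ℂ) = (K : MvPolynomial (Fin 2) ℂ) * e := by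
      rw [hndef]; push_cast; ring
    rw [hm', hn'] at hy
    linear_combination hy
  -- the key relation for A = F^e, B = G^d
  have hAB : pderiv 0 (F ^ e) * G ^ d = F ^ e * pderiv 0 (G ^ d) := by
    obtain ⟨d', rfl⟩ := Nat.exists_eq_succ_of_ne_zero hd.ne'
    obtain ⟨e', rfl⟩ := Nat.exists_eq_succ_of_ne_zero he.ne'
    rw [pderiv_pow, pderiv_pow]
    simp only [Nat.succ_eq_add_one, Nat.add_sub_cancel]
    push_cast at hcancel ⊢
    linear_combination (F ^ e' * G ^ d') * hcancel
  have hAhom : (F ^ e).IsHomogeneous (m * e) := hFhom.pow e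
  have hBhom : (G ^ d).IsHomogeneous (m * e) := by
    have : n * d = m * e := by rw [hmdef, hndef]; ring
    rw [← this]
    exact hGhom.pow d
  have hA0 : F ^ e ≠ 0 := pow_ne_zero _ hF0
  have hB0 : G ^ d ≠ 0 := pow_ne_zero _ hG0
  have ha : aeval ![Polynomial.X, (1 : Polynomial ℂ)] (F ^ e) ≠ 0 :=
    fun h => hA0 (homog_aeval_eq_zero hAhom h)
  have hb : aeval ![Polynomial.X, (1 : Polynomial ℂ)] (G ^ d) ≠ 0 :=
    fun h => hB0 (homog_aeval_eq_zero hBhom h)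
  have hab : Polynomial.derivative (aeval ![Polynomial.X, (1 : Polynomial ℂ)] (F ^ e))
      * aeval ![Polynomial.X, (1 : Polynomial ℂ)] (G ^ d)
      = aeval ![Polynomial.X, (1 : Polynomial ℂ)] (F ^ e)
      * Polynomial.derivative (aeval ![Polynomial.X, (1 : Polynomial ℂ)] (G ^ d)) := by
    rw [derivative_psi, derivative_psi, ← map_mul, ← map_mul, hAB]
  obtain ⟨c, hc, hcab⟩ := poly_prop ha hb hab
  refine ⟨c, hc, ?_⟩
  have hsubhom : (F ^ e - C c * G ^ d).IsHomogeneous (m * e) :=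
    hAhom.sub (hBhom.C_mul c)
  have hz0 : aeval ![Polynomial.X, (1 : Polynomial ℂ)] (F ^ e - C c * G ^ d) = 0 := by
    rw [map_sub, map_mul, hcab, algHom_C, Polynomial.algebraMap_eq]
    ring
  have := homog_aeval_eq_zero hsubhom hz0
  exact sub_eq_zero.mp this
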